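/- arXiv:math/9803007 — 5 statements merged into one kernel-verified Lean document; each statement's English description precedes it below -/
import Mathlib

section
/- Let M : ℕ → ℚ satisfy M(1) = 1 and, for every d ≥ 2, M(d) = ((2d−3)/d) · Σ_{j=1}^{d−1} C(2d−4, 2j−2) · j² · (d−j)² · M(j) · M(d−j). Then for every d ≥ 1 one has d³ · d! · M(d) = d^d · (2d−2)!, i.e. M(d) = d^{d−3} · (2d−2)!/d! as rational numbers. -/
open Finset Polynomial

/-- Abel's binomial identities (three mutually-inductive forms), over any commutative ring. -/
theorem abel_all {R : Type*} [CommRing R] (n : ℕ) :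
    (∀ x y : R, (y + (n:R))^n
        + ∑ k ∈ Ico 1 (n+1), (n.choose k : R) * (x * (x + (k:R))^(k-1))
            * (y + ((n:R) - (k:R)))^(n-k)
      = (x + y + (n:R))^n)
  ∧ (∀ x y : R, x * (x + ((n:R)+1))^n + y * (y + ((n:R)+1))^n
        + ∑ k ∈ Ico 1 (n+1), ((n+1).choose k : R) * (x * (x + (k:R))^(k-1))
            * (y * (y + (((n:R)+1) - (k:R)))^(n-k))
      = (x + y) * (x + y + ((n:R)+1))^n)
  ∧ (∀ x y : R, (x + ((n:R)+1))^(n+1)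
        + ∑ k ∈ range (n+1), ((n+1).choose k : R) * (x + (k:R))^k
            * (y * (y + (((n:R)+1) - (k:R)))^(n-k))
      = (x + y + ((n:R)+1))^(n+1)) := by
  induction n with
  | zero =>
    refine ⟨?_, ?_, ?_⟩ <;> intro x y <;> simp <;> ring
  | succ n ih =>
    obtain ⟨ih1, ih2, ih3⟩ := ih
    -- choose identity cast into R
    have hc : ∀ k : ℕ, k ≤ n + 1 →
        ((n+1).choose k : R) * (((n:R)+1) - (k:R)) = ((n:R)+1) * (n.choose k : R) := by
      intro k hk
      have h2 : ((n.choose k * (n+1) : ℕ) : R) = (((n+1).choose k * (n+1-k) : ℕ) : R) := by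
        exact_mod_cast congrArg (Nat.cast : ℕ → R) (Nat.choose_mul_succ_eq n k)
      push_cast [Nat.cast_sub hk] at h2
      linear_combination -h2
    -- Part 2 : II at size n+2, from I at size n+1 (built below? no: uses ih-level pieces)
    -- Part 1 : I at size n+1, from II at size n+1 (ih2) and I at size n (ih1)
    have p1 : ∀ x y : R, (y + ((n:R)+1))^(n+1)
        + ∑ k ∈ Ico 1 (n+2), ((n+1).choose k : R) * (x * (x + (k:R))^(k-1))
            * (y + (((n:R)+1) - (k:R)))^(n+1-k)
      = (x + y + ((n:R)+1))^(n+1) := by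
      intro x y
      rw [Finset.sum_Ico_succ_top (by omega)]
      have split : ∀ k ∈ Ico 1 (n+1),
          ((n+1).choose k : R) * (x * (x + (k:R))^(k-1)) * (y + (((n:R)+1) - (k:R)))^(n+1-k)
          = ((n+1).choose k : R) * (x * (x + (k:R))^(k-1))
              * (y * (y + (((n:R)+1) - (k:R)))^(n-k))
            + ((n:R)+1) * ((n.choose k : R) * (x * (x + (k:R))^(k-1))
              * ((y+1) + ((n:R) - (k:R)))^(n-k)) := by
        intro k hk
        simp only [mem_Ico] at hk
        have he : n + 1 - k = (n - k) + 1 := by omega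
        rw [he, pow_succ]
        linear_combination (x * (x + (k:R))^(k-1)) * ((y + (((n:R)+1) - (k:R)))^(n-k)) * hc k (by omega)
      rw [Finset.sum_congr rfl split, Finset.sum_add_distrib, ← Finset.mul_sum]
      have e1 := ih2 x y
      have e2 := ih1 x (y+1)
      simp only [Nat.choose_self, Nat.cast_one, Nat.sub_self, pow_zero, Nat.add_sub_cancel,
        Nat.cast_add, mul_one]
      linear_combination e1 + ((n:R)+1) * e2
    -- Part 2 : II at size n+2, from p1 and ih3
    have p2 : ∀ x y : R, x * (x + ((n:R)+2))^(n+1) + y * (y + ((n:R)+2))^(n+1)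
        + ∑ k ∈ Ico 1 (n+2), ((n+2).choose k : R) * (x * (x + (k:R))^(k-1))
            * (y * (y + (((n:R)+2) - (k:R)))^(n+1-k))
      = (x + y) * (x + y + ((n:R)+2))^(n+1) := by
      intro x y
      rw [Finset.sum_Ico_eq_sum_range]
      have hn : n + 2 - 1 = n + 1 := by omega
      rw [hn]
      have split : ∀ j ∈ range (n+1),
          ((n+2).choose (1+j) : R) * (x * (x + ((1+j : ℕ):R))^((1+j)-1))
            * (y * (y + (((n:R)+2) - ((1+j : ℕ):R)))^(n+1-(1+j)))
          = y * (((n+1).choose (1+j) : R) * (x * (x + ((1+j : ℕ):R))^((1+j)-1))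
              * (((y+1) + (((n:R)+1) - ((1+j : ℕ):R)))^(n+1-(1+j))))
            + x * (((n+1).choose j : R) * ((x+1) + (j:R))^j
              * (y * (y + (((n:R)+1) - (j:R)))^(n-j))) := by
        intro j hj
        simp only [mem_range] at hj
        have hch : ((n+2).choose (1+j) : ℕ) = (n+1).choose (1+j) + (n+1).choose j := by
          rw [add_comm 1 j, Nat.choose_succ_succ (n+1) j]
          simp only [Nat.succ_eq_add_one]
          omega
        have he1 : (1+j) - 1 = j := by omega
        have he2 : n + 1 - (1+j) = n - j := by omega
        rw [hch, he1, he2]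
        push_cast
        ring
      rw [Finset.sum_congr rfl split, Finset.sum_add_distrib, ← Finset.mul_sum, ← Finset.mul_sum]
      have e1 := p1 x (y+1)
      rw [Finset.sum_Ico_eq_sum_range, hn] at e1
      have norm1 : ∑ j ∈ range (n+1), ((n+1).choose (1+j) : R) * (x * (x + ((1+j : ℕ):R))^((1+j)-1))
            * ((y+1) + (((n:R)+1) - ((1+j : ℕ):R)))^(n+1-(1+j))
          = ∑ j ∈ range (n+1), ((n+1).choose (1+j) : R) * (x * (x + ((1+j : ℕ):R))^((1+j)-1))
            * (((y+1) + (((n:R)+1) - ((1+j : ℕ):R)))^(n+1-(1+j))) := by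
        exact Finset.sum_congr rfl (fun j hj => by ring)
      rw [norm1] at e1
      have e3 := ih3 (x+1) y
      linear_combination y * e1 + x * e3
    -- Part 3 : III at size n+2, from p2 and ih3
    have p3 : ∀ x y : R, (x + ((n:R)+2))^(n+2)
        + ∑ k ∈ range (n+2), ((n+2).choose k : R) * (x + (k:R))^k
            * (y * (y + (((n:R)+2) - (k:R)))^(n+1-k))
      = (x + y + ((n:R)+2))^(n+2) := by
      intro x y
      rw [Finset.sum_range_succ']
      have split : ∀ j ∈ range (n+1),
          ((n+2).choose (j+1) : R) * (x + ((j+1 : ℕ):R))^(j+1)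
            * (y * (y + (((n:R)+2) - ((j+1 : ℕ):R)))^(n+1-(j+1)))
          = ((n+2).choose (j+1) : R) * (x * (x + ((j+1 : ℕ):R))^((j+1)-1))
              * (y * (y + (((n:R)+2) - ((j+1 : ℕ):R)))^(n+1-(j+1)))
            + ((n:R)+2) * (((n+1).choose j : R) * ((x+1) + (j:R))^j
              * (y * (y + (((n:R)+1) - (j:R)))^(n-j))) := by
        intro j hj
        simp only [mem_range] at hj
        have hch : ((n+2) * ((n+1).choose j) : ℕ) = (n+2).choose (j+1) * (j+1) :=
          Nat.add_one_mul_choose_eq (n+1) j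
        have hchR : ((n:R)+2) * ((n+1).choose j : R) = ((n+2).choose (j+1) : R) * ((j+1 : ℕ):R) := by
          exact_mod_cast congrArg (Nat.cast : ℕ → R) hch
        have he1 : (j+1) - 1 = j := by omega
        have he2 : n + 1 - (j+1) = n - j := by omega
        have hp : (x + ((j+1 : ℕ):R))^(j+1) = (x + ((j+1 : ℕ):R))^j * (x + ((j+1 : ℕ):R)) := pow_succ _ _
        rw [he1, he2, hp]
        push_cast at hchR ⊢
        linear_combination (-((x + ((j:R)+1))^j * (y * (y + (((n:R)+1) - (j:R)))^(n-j)))) * hchR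
      rw [Finset.sum_congr rfl split, Finset.sum_add_distrib, ← Finset.mul_sum]
      have e2 := p2 x y
      rw [Finset.sum_Ico_eq_sum_range] at e2
      have hn : n + 2 - 1 = n + 1 := by omega
      rw [hn] at e2
      have norm2 : ∑ j ∈ range (n+1), ((n+2).choose (1+j) : R) * (x * (x + ((1+j : ℕ):R))^((1+j)-1))
            * (y * (y + (((n:R)+2) - ((1+j : ℕ):R)))^(n+1-(1+j)))
          = ∑ j ∈ range (n+1), ((n+2).choose (j+1) : R) * (x * (x + ((j+1 : ℕ):R))^((j+1)-1))
            * (y * (y + (((n:R)+2) - ((j+1 : ℕ):R)))^(n+1-(j+1))) := by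
        refine Finset.sum_congr rfl (fun j hj => by rw [add_comm 1 j])
      rw [norm2] at e2
      have e3 := ih3 (x+1) y
      simp only [Nat.choose_zero_right, Nat.cast_one, Nat.cast_zero, pow_zero, one_mul,
        sub_zero, Nat.sub_zero, add_zero]
      linear_combination e2 + ((n:R)+2) * e3
    have hre : n + 1 + 1 = n + 2 := rfl
    have hre2 : ((n:R)+1)+1 = ((n:R)+2) := by ring
    refine ⟨?_, ?_, ?_⟩ <;> intro x y <;> push_cast
    · rw [hre]; linear_combination p1 x y
    · rw [hre]; simp only [hre2]; linear_combination p2 x y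
    · rw [hre]; simp only [hre2]; linear_combination p3 x y

/-- Specialization of the Hurwitz/Abel identity after one coefficient extraction. -/
lemma six {A : Type*} [CommRing A] (n : ℕ) (b : A) :
    ((n:A)+1)^n
      + ∑ k ∈ Ico 1 (n+1), ((n+1).choose k : A) * (k:A)^(k-1)
          * (b * (b + (((n:A)+1) - (k:A)))^(n-k))
    = (b + ((n:A)+1))^n + b * ((n:A) * (b + ((n:A)+1))^(n-1)) := by
  have E := (abel_all n).2.1 (X : Polynomial A) (C b)
  -- merge constants under C
  simp only [← map_natCast (C : A →+* Polynomial A), ← C_1, add_assoc, ← C_add, ← C_sub,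
    ← C_mul, ← C_pow] at E
  have E1 := congrArg (fun p : Polynomial A => p.coeff 1) E
  simp only [add_mul, coeff_add, finset_sum_coeff, coeff_C_mul, coeff_mul_C, coeff_X_mul,
    coeff_C, coeff_X_add_C_pow, Nat.choose_zero_right, Nat.choose_one_right, Nat.sub_zero,
    Nat.cast_one, mul_one, one_ne_zero, if_false, mul_zero, zero_add, add_zero] at E1
  linear_combination E1


lemma key (n : ℕ) :
    ∑ k ∈ Ico 1 (n+1), ((n+1).choose k : ℚ) * (k:ℚ)^(k-1) * (((n:ℚ)+1) - (k:ℚ))^(n-k)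
      = 2 * n * ((n:ℚ)+1)^(n-1) := by
  have E := six n (X : Polynomial ℚ)
  simp only [← map_natCast (C : ℚ →+* Polynomial ℚ), ← C_1, add_assoc, ← C_add, ← C_sub,
    ← C_mul, ← C_pow] at E
  have E1 := congrArg (fun p : Polynomial ℚ => p.coeff 1) E
  simp only [add_mul, coeff_add, finset_sum_coeff, coeff_C_mul, coeff_mul_C, coeff_X_mul,
    coeff_C, coeff_X_add_C_pow, Nat.choose_zero_right, Nat.choose_one_right, Nat.sub_zero,
    Nat.cast_one, mul_one, one_ne_zero, if_false, mul_zero, zero_add, add_zero] at E1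
  linear_combination E1

/-- The rational sequence `M` defined by `M 1 = 1` and Pandharipande's genus-0 cover
recursion satisfies the closed form `M d = d^(d-3) (2d-2)!/d!`, stated as
`d^3 · d! · M d = d^d · (2d-2)!`. -/
theorem stmt_0 (M : ℕ → ℚ) (h1 : M 1 = 1)
    (hrec : ∀ d : ℕ, 2 ≤ d →
      M d = ((2 * (d : ℚ) - 3) / (d : ℚ)) *
        ∑ j ∈ Finset.Ico 1 d,
          (Nat.choose (2 * d - 4) (2 * j - 2) : ℚ) * (j : ℚ) ^ 2 * ((d - j : ℕ) : ℚ) ^ 2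
            * M j * M (d - j)) :
    ∀ d : ℕ, 1 ≤ d →
      (d : ℚ) ^ 3 * (Nat.factorial d : ℚ) * M d
        = (d : ℚ) ^ d * (Nat.factorial (2 * d - 2) : ℚ) := by
  intro d
  induction d using Nat.strong_induction_on with
  | _ d IH =>
    intro hd
    rcases eq_or_lt_of_le hd with h|hd2
    · subst h
      norm_num [h1, Nat.factorial]
    · have hd2' : 2 ≤ d := hd2
      have hterm : ∀ j ∈ Ico 1 d,
          (Nat.choose (2 * d - 4) (2 * j - 2) : ℚ) * (j : ℚ) ^ 2 * ((d - j : ℕ) : ℚ) ^ 2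
            * M j * M (d - j)
          = (((2*d-4).factorial : ℚ) / (d.factorial : ℚ))
              * ((d.choose j : ℚ) * (j:ℚ)^(j-1) * ((((d-1:ℕ)):ℚ)+1-(j:ℚ))^((d-1)-j)) := by
        intro j hj
        simp only [mem_Ico] at hj
        obtain ⟨hj1, hjd⟩ := hj
        have hMj := IH j hjd hj1
        have hMi := IH (d-j) (by omega) (by omega)
        have hP : ((j:ℚ)^3 * (j.factorial:ℚ) * M j) * (((d-j:ℕ):ℚ)^3 * ((d-j).factorial:ℚ) * M (d-j))
            = ((j:ℚ)^j * ((2*j-2).factorial:ℚ)) * (((d-j:ℕ):ℚ)^(d-j) * ((2*(d-j)-2).factorial:ℚ)) := by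
          rw [hMj, hMi]
        have hfac : ((2*d-4).choose (2*j-2) : ℚ) * ((2*j-2).factorial:ℚ) * ((2*(d-j)-2).factorial:ℚ)
            = ((2*d-4).factorial:ℚ) := by
          have h := Nat.choose_mul_factorial_mul_factorial (show 2*j-2 ≤ 2*d-4 by omega)
          rw [show 2*d-4 - (2*j-2) = 2*(d-j)-2 by omega] at h
          exact_mod_cast congrArg (Nat.cast : ℕ → ℚ) h
        have hdc : (d.choose j : ℚ) * (j.factorial:ℚ) * ((d-j).factorial:ℚ) = (d.factorial:ℚ) := by
          exact_mod_cast congrArg (Nat.cast : ℕ → ℚ)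
            (Nat.choose_mul_factorial_mul_factorial (show j ≤ d by omega))
        have hpj : (j:ℚ)^j = (j:ℚ)^(j-1) * (j:ℚ) := by
          rw [← pow_succ, show j-1+1 = j by omega]
        have hpi : ((d-j:ℕ):ℚ)^(d-j) = ((d-j:ℕ):ℚ)^((d-j)-1) * ((d-j:ℕ):ℚ) := by
          rw [← pow_succ, show (d-j)-1+1 = d-j by omega]
        have hbase : (((d-1:ℕ)):ℚ)+1-(j:ℚ) = ((d-j:ℕ):ℚ) := by
          rw [Nat.cast_sub (by omega : 1 ≤ d), Nat.cast_sub (by omega : j ≤ d)]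
          ring
        have hexp : (d-1)-j = (d-j)-1 := by omega
        rw [hbase, hexp, div_mul_eq_mul_div, eq_div_iff
          (by exact_mod_cast d.factorial_ne_zero : (d.factorial:ℚ) ≠ 0)]
        refine mul_left_cancel₀ (show ((j:ℚ)*((d-j:ℕ):ℚ)*(j.factorial:ℚ)*((d-j).factorial:ℚ)) ≠ 0
          from mul_ne_zero (mul_ne_zero (mul_ne_zero (Nat.cast_ne_zero.mpr (by omega))
            (Nat.cast_ne_zero.mpr (by omega))) (Nat.cast_ne_zero.mpr j.factorial_ne_zero))
            (Nat.cast_ne_zero.mpr (d-j).factorial_ne_zero)) ?_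
        linear_combination (((2*d-4).choose (2*j-2):ℚ) * (d.factorial:ℚ)) * hP
          + ((d.factorial:ℚ) * (j:ℚ)^j * ((d-j:ℕ):ℚ)^(d-j)) * hfac
          - (((2*d-4).factorial:ℚ) * (j:ℚ)^j * ((d-j:ℕ):ℚ)^(d-j)) * hdc
          + (((2*d-4).factorial:ℚ) * (d.choose j:ℚ) * (j.factorial:ℚ) * ((d-j).factorial:ℚ)
              * ((d-j:ℕ):ℚ)^(d-j)) * hpj
          + (((2*d-4).factorial:ℚ) * (d.choose j:ℚ) * (j.factorial:ℚ) * ((d-j).factorial:ℚ)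
              * (j:ℚ)^(j-1) * (j:ℚ)) * hpi
      rw [hrec d hd2', Finset.sum_congr rfl hterm, ← Finset.mul_sum]
      have E := key (d-1)
      rw [show d-1+1 = d by omega] at E
      rw [E]
      obtain ⟨e, rfl⟩ : ∃ e, d = e + 2 := ⟨d - 2, by omega⟩
      rw [show e+2-1 = e+1 by omega, show (e+1)-1 = e by omega,
        show 2*(e+2)-2 = 2*e+2 by omega, show 2*(e+2)-4 = 2*e by omega]
      have hf2 : ((2*e+2).factorial:ℚ) = ((2*e+2:ℕ):ℚ)*((2*e+1:ℕ):ℚ)*((2*e).factorial:ℚ) := by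
        rw [show 2*e+2 = (2*e+1)+1 by omega, Nat.factorial_succ, Nat.factorial_succ]
        push_cast; ring
      have hne1 : ((e:ℚ)+2) ≠ 0 := by positivity
      have hne2 : (((e+2).factorial:ℚ)) ≠ 0 := by exact_mod_cast (e+2).factorial_ne_zero
      rw [hf2]
      push_cast
      field_simp
      ring
end

section
/- Fix an integer d ≥ 2 and let R : ℕ → ℚ be any function. Define A = R(d), B = −R(d)/d + (1/(2d)) · Σ_{i+j=d, i,j≥1} C(3d−2, 3i−1) · i² · j² · R(i) · R(j), and C = −(1/2) · Σ_{i+j=d, i,j≥1} C(3d−2, 3i−1) · i · j · R(i) · R(j). Then the Kontsevich recursion equation R(d) = Σ_{i+j=d, i,j≥1} i² · j · ( j · C(3d−4, 3i−2) − i · C(3d−4, 3i−1) ) · R(i) · R(j) holds if and only if 9(d−2) · A = 3(d+2) · B + 2d · C. -/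
/-!
Write `N = 3d - 2` and `S₂ = Σ C(N, 3i - 1) i²j² R_i R_j`, `S₁ = Σ C(N, 3i - 1) ij R_i R_j`.
For `i + j = d`, both binomials `C(N - 2, 3i - 2)` and `C(N - 2, 3i - 1)` of Kontsevich's
recursion are rational multiples of `C(N, 3i - 1)`, which is symmetric under `i ↔ j`. After this
substitution, `2N(N - 1) = 6(3d - 2)(d - 1)` times the sum of the `(i, j)` and `(j, i)` terms of the
recursion equals the sum of the `(i, j)` and `(j, i)` terms of `3(d + 2) S₂ - 2d² S₁`. So the
recursion says `6(3d - 2)(d - 1) R_d = 3(d + 2) S₂ - 2d² S₁`, which is `2d` times the divisor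
relation.
-/

namespace Nat

theorem choose_add_two_succ_mul {a b n : ℕ} (h : a + b = n) :
    (n + 2).choose (a + 1) * ((a + 1) * (b + 1)) = (n + 2) * (n + 1) * n.choose a := by
  subst h
  have h₁ := add_one_mul_choose_eq (a + b) a
  have h₂ := choose_mul_succ_eq (a + b + 1) (a + 1)
  rw [show a + b + 1 + 1 - (a + 1) = b + 1 by omega] at h₂
  calc _ = (a + b + 1 + 1).choose (a + 1) * (b + 1) * (a + 1) := by ring
    _ = (a + b + 2) * ((a + b + 1) * (a + b).choose a) := by rw [← h₂, h₁]; ring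
    _ = _ := by ring

theorem choose_add_two_mul {a b n : ℕ} (h : a + b = n) :
    (n + 2).choose a * ((b + 2) * (b + 1)) = (n + 2) * (n + 1) * n.choose a := by
  subst h
  have h₁ := choose_mul_succ_eq (a + b) a
  have h₂ := choose_mul_succ_eq (a + b + 1) a
  rw [show a + b + 1 - a = b + 1 by omega] at h₁
  rw [show a + b + 1 + 1 - a = b + 2 by omega] at h₂
  calc _ = (a + b + 1 + 1).choose a * (b + 2) * (b + 1) := by ring
    _ = _ := by rw [← h₂, mul_assoc, mul_comm (a + b + 1 + 1), ← mul_assoc, ← h₁]; ring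

end Nat

/-- The `i`-th term of `6(3d - 2)(d - 1) K - 3(d + 2) S₂ + 2d² S₁`, with `K` the right-hand side
of Kontsevich's recursion. -/
def kontsevichDefect (d : ℕ) (R : ℕ → ℚ) (i : ℕ) : ℚ :=
  6 * (3 * (d : ℚ) - 2) * ((d : ℚ) - 1) * ((i : ℚ) ^ 2 * ((d - i : ℕ) : ℚ) *
      (((d - i : ℕ) : ℚ) * (Nat.choose (3 * d - 4) (3 * i - 2) : ℚ)
        - (i : ℚ) * (Nat.choose (3 * d - 4) (3 * i - 1) : ℚ)) * R i * R (d - i))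
    - 3 * ((d : ℚ) + 2) * ((Nat.choose (3 * d - 2) (3 * i - 1) : ℚ) * (i : ℚ) ^ 2
      * ((d - i : ℕ) : ℚ) ^ 2 * R i * R (d - i))
    + 2 * (d : ℚ) ^ 2 * ((Nat.choose (3 * d - 2) (3 * i - 1) : ℚ) * (i : ℚ)
      * ((d - i : ℕ) : ℚ) * R i * R (d - i))

theorem kontsevichDefect_add_reflect (R : ℕ → ℚ) (a b : ℕ) :
    kontsevichDefect (a + b + 2) R (a + 1) + kontsevichDefect (a + b + 2) R (b + 1) = 0 := by
  have hn : 3 * a + 1 + (3 * b + 1) = 3 * a + 3 * b + 2 := by ring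
  have h₁ := Nat.choose_add_two_succ_mul hn
  have h₂ := Nat.choose_add_two_mul (a := 3 * a + 1 + 1) (b := 3 * b)
    (n := 3 * a + 3 * b + 2) (by ring)
  have h₃ := Nat.choose_add_two_succ_mul ((add_comm _ _).trans hn)
  have h₄ := Nat.choose_add_two_mul (a := 3 * b + 1 + 1) (b := 3 * a)
    (n := 3 * a + 3 * b + 2) (by ring)
  have hsymm : (3 * a + 3 * b + 2 + 2).choose (3 * b + 1 + 1)
      = (3 * a + 3 * b + 2 + 2).choose (3 * a + 1 + 1) := by
    rw [show 3 * a + 3 * b + 2 + 2 = (3 * b + 1 + 1) + (3 * a + 1 + 1) by ring,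
      Nat.choose_symm_add]
  rw [hsymm] at h₃ h₄
  simp only [kontsevichDefect]
  rw [show a + b + 2 - (a + 1) = b + 1 by omega, show a + b + 2 - (b + 1) = a + 1 by omega,
    show 3 * (a + b + 2) - 2 = 3 * a + 3 * b + 2 + 2 by omega,
    show 3 * (a + b + 2) - 4 = 3 * a + 3 * b + 2 by omega,
    show 3 * (a + 1) - 1 = 3 * a + 1 + 1 by omega, show 3 * (a + 1) - 2 = 3 * a + 1 by omega,
    show 3 * (b + 1) - 1 = 3 * b + 1 + 1 by omega, show 3 * (b + 1) - 2 = 3 * b + 1 by omega,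
    hsymm]
  apply_fun (Nat.cast : ℕ → ℚ) at h₁ h₂ h₃ h₄
  push_cast at h₁ h₂ h₃ h₄ ⊢
  set i : ℚ := (a : ℚ) + 1
  set j : ℚ := (b : ℚ) + 1
  linear_combination (-2 * i ^ 2 * j ^ 2 * R (a + 1) * R (b + 1)) * h₁
    + (2 * i ^ 3 * j * R (a + 1) * R (b + 1)) * h₂
    - (2 * i ^ 2 * j ^ 2 * R (a + 1) * R (b + 1)) * h₃
    + (2 * i * j ^ 3 * R (a + 1) * R (b + 1)) * h₄

theorem sum_kontsevichDefect (d : ℕ) (R : ℕ → ℚ) :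
    ∑ i ∈ Finset.Ico 1 d, kontsevichDefect d R i = 0 := by
  have hpair : ∀ i ∈ Finset.Ico 1 d,
      kontsevichDefect d R i + kontsevichDefect d R (d - i) = 0 := by
    intro i hi
    rw [Finset.mem_Ico] at hi
    obtain ⟨a, rfl⟩ : ∃ a, i = a + 1 := ⟨i - 1, by omega⟩
    obtain ⟨b, rfl⟩ : ∃ b, d = a + b + 2 := ⟨d - a - 2, by omega⟩
    rw [show a + b + 2 - (a + 1) = b + 1 by omega]
    exact kontsevichDefect_add_reflect R a b
  refine Finset.sum_involution (fun i _ => d - i) hpair ?_ ?_ ?_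
  · intro i hi hne hfix
    have h := hpair i hi
    rw [hfix] at h
    exact hne (by linarith)
  · intro i hi
    rw [Finset.mem_Ico] at hi ⊢
    omega
  · intro i hi
    rw [Finset.mem_Ico] at hi
    omega

/-- For `d ≥ 2` and any `R : ℕ → ℚ`, with `A`, `B`, `C` the genus-0 divisor degrees
built from `R`, Kontsevich's recursion for `R d` holds iff `9(d-2)A = 3(d+2)B + 2dC`. -/
theorem stmt_1 (d : ℕ) (hd : 2 ≤ d) (R : ℕ → ℚ) (A B C : ℚ)
    (hA : A = R d)
    (hB : B = -R d / (d : ℚ) + (1 / (2 * (d : ℚ))) *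
      ∑ i ∈ Finset.Ico 1 d,
        (Nat.choose (3 * d - 2) (3 * i - 1) : ℚ) * (i : ℚ) ^ 2 * ((d - i : ℕ) : ℚ) ^ 2
          * R i * R (d - i))
    (hC : C = -(1 / 2) *
      ∑ i ∈ Finset.Ico 1 d,
        (Nat.choose (3 * d - 2) (3 * i - 1) : ℚ) * (i : ℚ) * ((d - i : ℕ) : ℚ)
          * R i * R (d - i)) :
    (R d = ∑ i ∈ Finset.Ico 1 d,
        (i : ℚ) ^ 2 * ((d - i : ℕ) : ℚ) *
          (((d - i : ℕ) : ℚ) * (Nat.choose (3 * d - 4) (3 * i - 2) : ℚ)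
            - (i : ℚ) * (Nat.choose (3 * d - 4) (3 * i - 1) : ℚ))
          * R i * R (d - i))
      ↔ 9 * ((d : ℚ) - 2) * A = 3 * ((d : ℚ) + 2) * B + 2 * (d : ℚ) * C := by
  have key := sum_kontsevichDefect d R
  simp only [kontsevichDefect, Finset.sum_add_distrib, Finset.sum_sub_distrib,
    ← Finset.mul_sum] at key
  subst hA hB hC
  have hd' : (2 : ℚ) ≤ d := by exact_mod_cast hd
  have hc : 6 * (3 * (d : ℚ) - 2) * ((d : ℚ) - 1) ≠ 0 := by nlinarith
  rw [← mul_right_inj' hc]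
  constructor <;> intro h
  · field_simp
    linear_combination h + key
  · field_simp at h
    linear_combination h - key
end

section
/- Let R : ℕ → ℚ satisfy R(1) = 1 and, for every d ≥ 2, the Kontsevich recursion R(d) = Σ_{i+j=d, i,j≥1} i² · j · ( j · C(3d−4, 3i−2) − i · C(3d−4, 3i−1) ) · R(i) · R(j). Let E : ℕ → ℚ satisfy, for every d ≥ 1, the Eguchi–Hori–Xiong recursion E(d) = (1/12) · C(d, 3) · R(d) + Σ_{i+j=d, i,j≥1} ( i · j · (3i−2) / 9 ) · C(3d−1, 3j) · R(i) · E(j). Then E(1) = 0, E(2) = 0, E(3) = 1, E(4) = 225, and E(5) = 87192. -/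
/-- If `R` satisfies Kontsevich's recursion with `R 1 = 1` and `E` satisfies the
Eguchi–Hori–Xiong recursion, then the incidence-only characteristic numbers of
elliptic plane curves are `E 1 = 0`, `E 2 = 0`, `E 3 = 1`, `E 4 = 225`,
`E 5 = 87192`. -/
theorem stmt_4 (R E : ℕ → ℚ) (hR1 : R 1 = 1)
    (hR : ∀ d : ℕ, 2 ≤ d →
      R d = ∑ i ∈ Finset.Ico 1 d,
        (i : ℚ) ^ 2 * ((d - i : ℕ) : ℚ) *
          (((d - i : ℕ) : ℚ) * (Nat.choose (3 * d - 4) (3 * i - 2) : ℚ)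
            - (i : ℚ) * (Nat.choose (3 * d - 4) (3 * i - 1) : ℚ))
          * R i * R (d - i))
    (hE : ∀ d : ℕ, 1 ≤ d →
      E d = (1 / 12) * (Nat.choose d 3 : ℚ) * R d +
        ∑ i ∈ Finset.Ico 1 d,
          ((i : ℚ) * ((d - i : ℕ) : ℚ) * (3 * (i : ℚ) - 2) / 9)
            * (Nat.choose (3 * d - 1) (3 * (d - i)) : ℚ) * R i * E (d - i)) :
    E 1 = 0 ∧ E 2 = 0 ∧ E 3 = 1 ∧ E 4 = 225 ∧ E 5 = 87192 := by
  have s2 : Finset.Ico 1 2 = {1} := rfl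
  have s3 : Finset.Ico 1 3 = {1, 2} := rfl
  have s4 : Finset.Ico 1 4 = {1, 2, 3} := rfl
  have s5 : Finset.Ico 1 5 = {1, 2, 3, 4} := rfl
  have hR2 : R 2 = 1 := by
    rw [hR 2 (by norm_num)]; norm_num [s2, hR1, Nat.choose]
  have hR3 : R 3 = 12 := by
    rw [hR 3 (by norm_num)]; norm_num [s3, hR1, hR2, Nat.choose]
  have hR4 : R 4 = 620 := by
    rw [hR 4 (by norm_num)]; norm_num [s4, hR1, hR2, hR3, Nat.choose]
  have hR5 : R 5 = 87304 := by
    rw [hR 5 (by norm_num)]; norm_num [s5, hR1, hR2, hR3, hR4, Nat.choose]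
  have hE1 : E 1 = 0 := by
    rw [hE 1 (by norm_num)]; norm_num [Nat.choose]
  have hE2 : E 2 = 0 := by
    rw [hE 2 (by norm_num)]; norm_num [s2, hR1, hR2, hE1, Nat.choose]
  have hE3 : E 3 = 1 := by
    rw [hE 3 (by norm_num)]; norm_num [s3, hR1, hR2, hR3, hE1, hE2, Nat.choose]
  have hE4 : E 4 = 225 := by
    rw [hE 4 (by norm_num)]; norm_num [s4, hR1, hR2, hR3, hR4, hE1, hE2, hE3, Nat.choose]
  have hE5 : E 5 = 87192 := by
    rw [hE 5 (by norm_num)]; norm_num [s5, hR1, hR2, hR3, hR4, hR5, hE1, hE2, hE3, hE4, Nat.choose]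
  exact ⟨hE1, hE2, hE3, hE4, hE5⟩
end

section
/- Let R : ℕ → ℚ satisfy R(1) = 1 and, for every d ≥ 2, the Kontsevich recursion R(d) = Σ_{i+j=d, i,j≥1} i² · j · ( j · C(3d−4, 3i−2) − i · C(3d−4, 3i−1) ) · R(i) · R(j). Let E : ℕ → ℚ satisfy, for every d ≥ 1, the Eguchi–Hori–Xiong recursion E(d) = (1/12) · C(d, 3) · R(d) + Σ_{i+j=d, i,j≥1} ( i · j · (3i−2) / 9 ) · C(3d−1, 3j) · R(i) · E(j). For d ≥ 1 define ĝ(d) by 2·ĝ(d) − 2 = (3d − 5/2) · E(d) + ((3d−26)/24) · C(d−1, 2) · R(d) + Σ_{i+j=d, i,j≥1} i · j · C(3d−1, 3i−1) · R(i) · E(j) · ((3/2)i − 2). Then ĝ(3) = 0, ĝ(4) = 486, ĝ(5) = 410439, ĝ(6) = 395296561, and ĝ(7) = 534578574561. -/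
set_option maxHeartbeats 1000000 in
/-- With `R` satisfying Kontsevich's recursion (`R 1 = 1`), `E` the
Eguchi–Hori–Xiong elliptic numbers, and `gHat` defined by the paper's formula for
`2gHat_d - 2`, the geometric sectional genera of the genus-1 Severi varieties are
`gHat 3 = 0`, `gHat 4 = 486`, `gHat 5 = 410439`, `gHat 6 = 395296561`, `gHat 7 = 534578574561`. -/
theorem stmt_5 (R E gHat : ℕ → ℚ) (hR1 : R 1 = 1)
    (hR : ∀ d : ℕ, 2 ≤ d →
      R d = ∑ i ∈ Finset.Ico 1 d,
        (i : ℚ) ^ 2 * ((d - i : ℕ) : ℚ) *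
          (((d - i : ℕ) : ℚ) * (Nat.choose (3 * d - 4) (3 * i - 2) : ℚ)
            - (i : ℚ) * (Nat.choose (3 * d - 4) (3 * i - 1) : ℚ))
          * R i * R (d - i))
    (hE : ∀ d : ℕ, 1 ≤ d →
      E d = (1 / 12) * (Nat.choose d 3 : ℚ) * R d +
        ∑ i ∈ Finset.Ico 1 d,
          ((i : ℚ) * ((d - i : ℕ) : ℚ) * (3 * (i : ℚ) - 2) / 9)
            * (Nat.choose (3 * d - 1) (3 * (d - i)) : ℚ) * R i * E (d - i))
    (hg : ∀ d : ℕ, 1 ≤ d →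
      2 * gHat d - 2 = (3 * (d : ℚ) - 5 / 2) * E d
        + ((3 * (d : ℚ) - 26) / 24) * (Nat.choose (d - 1) 2 : ℚ) * R d
        + ∑ i ∈ Finset.Ico 1 d,
            (i : ℚ) * ((d - i : ℕ) : ℚ) * (Nat.choose (3 * d - 1) (3 * i - 1) : ℚ)
              * R i * E (d - i) * ((3 / 2) * (i : ℚ) - 2)) :
    gHat 3 = 0 ∧ gHat 4 = 486 ∧ gHat 5 = 410439 ∧ gHat 6 = 395296561 ∧ gHat 7 = 534578574561 := by
  have hR2 : R 2 = 1 := by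
    have h := hR 2 (by norm_num); rw [h]
    norm_num [Nat.choose, Finset.sum_Ico_eq_sum_range, Finset.sum_range_succ, hR1]
  have hR3 : R 3 = 12 := by
    have h := hR 3 (by norm_num); rw [h]
    norm_num [Nat.choose, Finset.sum_Ico_eq_sum_range, Finset.sum_range_succ, hR1, hR2]
  have hR4 : R 4 = 620 := by
    have h := hR 4 (by norm_num); rw [h]
    norm_num [Nat.choose, Finset.sum_Ico_eq_sum_range, Finset.sum_range_succ, hR1, hR2, hR3]
  have hR5 : R 5 = 87304 := by
    have h := hR 5 (by norm_num); rw [h]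
    norm_num [Nat.choose, Finset.sum_Ico_eq_sum_range, Finset.sum_range_succ, hR1, hR2, hR3, hR4]
  have hR6 : R 6 = 26312976 := by
    have h := hR 6 (by norm_num); rw [h]
    norm_num [Nat.choose, Finset.sum_Ico_eq_sum_range, Finset.sum_range_succ, hR1, hR2, hR3, hR4, hR5]
  have hR7 : R 7 = 14616808192 := by
    have h := hR 7 (by norm_num); rw [h]
    norm_num [Nat.choose, Finset.sum_Ico_eq_sum_range, Finset.sum_range_succ, hR1, hR2, hR3, hR4, hR5, hR6]
  have hE1 : E 1 = 0 := by
    have h := hE 1 (by norm_num); rw [h]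
    norm_num [Nat.choose, Finset.sum_Ico_eq_sum_range, Finset.sum_range_succ, hR1]
  have hE2 : E 2 = 0 := by
    have h := hE 2 (by norm_num); rw [h]
    norm_num [Nat.choose, Finset.sum_Ico_eq_sum_range, Finset.sum_range_succ, hR1, hR2, hE1]
  have hE3 : E 3 = 1 := by
    have h := hE 3 (by norm_num); rw [h]
    norm_num [Nat.choose, Finset.sum_Ico_eq_sum_range, Finset.sum_range_succ, hR1, hR2, hR3, hE1, hE2]
  have hE4 : E 4 = 225 := by
    have h := hE 4 (by norm_num); rw [h]
    norm_num [Nat.choose, Finset.sum_Ico_eq_sum_range, Finset.sum_range_succ, hR1, hR2, hR3, hR4, hE1, hE2, hE3]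
  have hE5 : E 5 = 87192 := by
    have h := hE 5 (by norm_num); rw [h]
    norm_num [Nat.choose, Finset.sum_Ico_eq_sum_range, Finset.sum_range_succ, hR1, hR2, hR3, hR4, hR5, hE1, hE2, hE3, hE4]
  have hE6 : E 6 = 57435240 := by
    have h := hE 6 (by norm_num); rw [h]
    norm_num [Nat.choose, Finset.sum_Ico_eq_sum_range, Finset.sum_range_succ, hR1, hR2, hR3, hR4, hR5, hR6, hE1, hE2, hE3, hE4, hE5]
  have hE7 : E 7 = 60478511040 := by
    have h := hE 7 (by norm_num); rw [h]
    norm_num [Nat.choose, Finset.sum_Ico_eq_sum_range, Finset.sum_range_succ, hR1, hR2, hR3, hR4, hR5, hR6, hR7, hE1, hE2, hE3, hE4, hE5, hE6]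
  have hg3 : gHat 3 = 0 := by
    have h := hg 3 (by norm_num)
    norm_num [Nat.choose, Finset.sum_Ico_eq_sum_range, Finset.sum_range_succ, hR1, hR2, hR3, hE1, hE2, hE3] at h
    linarith
  have hg4 : gHat 4 = 486 := by
    have h := hg 4 (by norm_num)
    norm_num [Nat.choose, Finset.sum_Ico_eq_sum_range, Finset.sum_range_succ, hR1, hR2, hR3, hR4, hE1, hE2, hE3, hE4] at h
    linarith
  have hg5 : gHat 5 = 410439 := by
    have h := hg 5 (by norm_num)
    norm_num [Nat.choose, Finset.sum_Ico_eq_sum_range, Finset.sum_range_succ, hR1, hR2, hR3, hR4, hR5, hE1, hE2, hE3, hE4, hE5] at h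
    linarith
  have hg6 : gHat 6 = 395296561 := by
    have h := hg 6 (by norm_num)
    norm_num [Nat.choose, Finset.sum_Ico_eq_sum_range, Finset.sum_range_succ, hR1, hR2, hR3, hR4, hR5, hR6, hE1, hE2, hE3, hE4, hE5, hE6] at h
    linarith
  have hg7 : gHat 7 = 534578574561 := by
    have h := hg 7 (by norm_num)
    norm_num [Nat.choose, Finset.sum_Ico_eq_sum_range, Finset.sum_range_succ, hR1, hR2, hR3, hR4, hR5, hR6, hR7, hE1, hE2, hE3, hE4, hE5, hE6, hE7] at h
    linarith
  exact ⟨hg3, hg4, hg5, hg6, hg7⟩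
end

section
/- Let R : ℕ → ℚ satisfy R(1) = 1 and, for every d ≥ 2, the Kontsevich recursion R(d) = Σ_{i+j=d, i,j≥1} i² · j · ( j · C(3d−4, 3i−2) − i · C(3d−4, 3i−1) ) · R(i) · R(j). Let E : ℕ → ℚ satisfy, for every d ≥ 1, the Eguchi–Hori–Xiong recursion E(d) = (1/12) · C(d, 3) · R(d) + Σ_{i+j=d, i,j≥1} ( i · j · (3i−2) / 9 ) · C(3d−1, 3j) · R(i) · E(j). For d ≥ 1 define: B(d) = (d/12) · C(d−1, 2) · R(d) + Σ_{i+j=d, i,j≥1} i² · j · C(3d−1, 3i−1) · R(i) · E(j); Cc(d) = −Σ_{i+j=d, i,j≥1} i · j · C(3d−1, 3i−1) · R(i) · E(j); Δ(d) = C(d−1, 2) · R(d) + Σ_{i+j=d, i,j≥1} i · j · C(3d−1, 3i−1) · R(i) · E(j); CU(d) = 3·E(d) + 3·B(d) + Cc(d) − Δ(d); ĝ(d) by 2·ĝ(d) − 2 = (3d − 5/2) · E(d) + ((3d−26)/24) · C(d−1, 2) · R(d) + Σ_{i+j=d, i,j≥1} i · j · C(3d−1, 3i−1) · R(i) · E(j)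 · ((3/2)i − 2); and g(d) = ĝ(d) + CU(d) + Σ_{i+j=d, i,j≥1} (i·j − 1) · C(3d−1, 3i−1) · R(i) · E(j) + ( C(d−1, 2) − 1 ) · R(d). Then g(3) = 0, g(4) = 2676, g(5) = 1440874, g(6) = 1117718773, and g(7) = 1317320595961. -/
set_option maxHeartbeats 4000000 in
/-- With `R` satisfying Kontsevich's recursion (`R 1 = 1`), `E` the
Eguchi–Hori–Xiong elliptic numbers, `B`, `Cc`, `Δ` the genus-1 divisor degrees,
`CU` the number of cuspidal elliptic curves, `gHat` the geometric sectional genus,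
and `g` the arithmetic sectional genus of the genus-1 Severi variety, one has
`g 3 = 0`, `g 4 = 2676`, `g 5 = 1440874`, `g 6 = 1117718773`,
`g 7 = 1317320595961`. -/
theorem stmt_6 (R E B Cc Δ CU gHat g : ℕ → ℚ) (hR1 : R 1 = 1)
    (hR : ∀ d : ℕ, 2 ≤ d →
      R d = ∑ i ∈ Finset.Ico 1 d,
        (i : ℚ) ^ 2 * ((d - i : ℕ) : ℚ) *
          (((d - i : ℕ) : ℚ) * (Nat.choose (3 * d - 4) (3 * i - 2) : ℚ)
            - (i : ℚ) * (Nat.choose (3 * d - 4) (3 * i - 1) : ℚ))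
          * R i * R (d - i))
    (hE : ∀ d : ℕ, 1 ≤ d →
      E d = (1 / 12) * (Nat.choose d 3 : ℚ) * R d +
        ∑ i ∈ Finset.Ico 1 d,
          ((i : ℚ) * ((d - i : ℕ) : ℚ) * (3 * (i : ℚ) - 2) / 9)
            * (Nat.choose (3 * d - 1) (3 * (d - i)) : ℚ) * R i * E (d - i))
    (hB : ∀ d : ℕ, 1 ≤ d →
      B d = ((d : ℚ) / 12) * (Nat.choose (d - 1) 2 : ℚ) * R d +
        ∑ i ∈ Finset.Ico 1 d,
          (i : ℚ) ^ 2 * ((d - i : ℕ) : ℚ) * (Nat.choose (3 * d - 1) (3 * i - 1) : ℚ)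
            * R i * E (d - i))
    (hCc : ∀ d : ℕ, 1 ≤ d →
      Cc d = -∑ i ∈ Finset.Ico 1 d,
        (i : ℚ) * ((d - i : ℕ) : ℚ) * (Nat.choose (3 * d - 1) (3 * i - 1) : ℚ)
          * R i * E (d - i))
    (hΔ : ∀ d : ℕ, 1 ≤ d →
      Δ d = (Nat.choose (d - 1) 2 : ℚ) * R d +
        ∑ i ∈ Finset.Ico 1 d,
          (i : ℚ) * ((d - i : ℕ) : ℚ) * (Nat.choose (3 * d - 1) (3 * i - 1) : ℚ)
            * R i * E (d - i))
    (hCU : ∀ d : ℕ, 1 ≤ d → CU d = 3 * E d + 3 * B d + Cc d - Δ d)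
    (hgHat : ∀ d : ℕ, 1 ≤ d →
      2 * gHat d - 2 = (3 * (d : ℚ) - 5 / 2) * E d
        + ((3 * (d : ℚ) - 26) / 24) * (Nat.choose (d - 1) 2 : ℚ) * R d
        + ∑ i ∈ Finset.Ico 1 d,
            (i : ℚ) * ((d - i : ℕ) : ℚ) * (Nat.choose (3 * d - 1) (3 * i - 1) : ℚ)
              * R i * E (d - i) * ((3 / 2) * (i : ℚ) - 2))
    (hg : ∀ d : ℕ, 1 ≤ d →
      g d = gHat d + CU d
        + ∑ i ∈ Finset.Ico 1 d,
            ((i : ℚ) * ((d - i : ℕ) : ℚ) - 1) * (Nat.choose (3 * d - 1) (3 * i - 1) : ℚ)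
              * R i * E (d - i)
        + ((Nat.choose (d - 1) 2 : ℚ) - 1) * R d) :
    g 3 = 0 ∧ g 4 = 2676 ∧ g 5 = 1440874 ∧ g 6 = 1117718773 ∧ g 7 = 1317320595961 := by
  have c1_3 : Nat.choose 1 3 = 0 := by rfl
  have c2_1 : Nat.choose 2 1 = 2 := by rfl
  have c2_2 : Nat.choose 2 2 = 1 := by rfl
  have c2_3 : Nat.choose 2 3 = 0 := by rfl
  have c3_2 : Nat.choose 3 2 = 3 := by rfl
  have c3_3 : Nat.choose 3 3 = 1 := by rfl
  have c4_2 : Nat.choose 4 2 = 6 := by rfl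
  have c4_3 : Nat.choose 4 3 = 4 := by rfl
  have c5_1 : Nat.choose 5 1 = 5 := by rfl
  have c5_2 : Nat.choose 5 2 = 10 := by rfl
  have c5_3 : Nat.choose 5 3 = 10 := by rfl
  have c5_4 : Nat.choose 5 4 = 5 := by rfl
  have c5_5 : Nat.choose 5 5 = 1 := by rfl
  have c6_2 : Nat.choose 6 2 = 15 := by rfl
  have c6_3 : Nat.choose 6 3 = 20 := by rfl
  have c7_3 : Nat.choose 7 3 = 35 := by rfl
  have c8_1 : Nat.choose 8 1 = 8 := by rfl
  have c8_2 : Nat.choose 8 2 = 28 := by rfl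
  have c8_3 : Nat.choose 8 3 = 56 := by rfl
  have c8_4 : Nat.choose 8 4 = 70 := by rfl
  have c8_5 : Nat.choose 8 5 = 56 := by rfl
  have c8_6 : Nat.choose 8 6 = 28 := by rfl
  have c8_7 : Nat.choose 8 7 = 8 := by rfl
  have c8_8 : Nat.choose 8 8 = 1 := by rfl
  have c11_1 : Nat.choose 11 1 = 11 := by rfl
  have c11_2 : Nat.choose 11 2 = 55 := by rfl
  have c11_3 : Nat.choose 11 3 = 165 := by rfl
  have c11_4 : Nat.choose 11 4 = 330 := by rfl
  have c11_5 : Nat.choose 11 5 = 462 := by rfl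
  have c11_6 : Nat.choose 11 6 = 462 := by rfl
  have c11_7 : Nat.choose 11 7 = 330 := by rfl
  have c11_8 : Nat.choose 11 8 = 165 := by rfl
  have c11_9 : Nat.choose 11 9 = 55 := by rfl
  have c11_10 : Nat.choose 11 10 = 11 := by rfl
  have c11_11 : Nat.choose 11 11 = 1 := by rfl
  have c14_1 : Nat.choose 14 1 = 14 := by rfl
  have c14_2 : Nat.choose 14 2 = 91 := by rfl
  have c14_3 : Nat.choose 14 3 = 364 := by rfl
  have c14_4 : Nat.choose 14 4 = 1001 := by rfl
  have c14_5 : Nat.choose 14 5 = 2002 := by rfl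
  have c14_6 : Nat.choose 14 6 = 3003 := by rfl
  have c14_7 : Nat.choose 14 7 = 3432 := by rfl
  have c14_8 : Nat.choose 14 8 = 3003 := by rfl
  have c14_9 : Nat.choose 14 9 = 2002 := by rfl
  have c14_10 : Nat.choose 14 10 = 1001 := by rfl
  have c14_11 : Nat.choose 14 11 = 364 := by rfl
  have c14_12 : Nat.choose 14 12 = 91 := by rfl
  have c14_13 : Nat.choose 14 13 = 14 := by rfl
  have c14_14 : Nat.choose 14 14 = 1 := by rfl
  have c17_1 : Nat.choose 17 1 = 17 := by rfl
  have c17_2 : Nat.choose 17 2 = 136 := by rfl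
  have c17_3 : Nat.choose 17 3 = 680 := by rfl
  have c17_4 : Nat.choose 17 4 = 2380 := by rfl
  have c17_5 : Nat.choose 17 5 = 6188 := by rfl
  have c17_6 : Nat.choose 17 6 = 12376 := by rfl
  have c17_7 : Nat.choose 17 7 = 19448 := by rfl
  have c17_8 : Nat.choose 17 8 = 24310 := by rfl
  have c17_9 : Nat.choose 17 9 = 24310 := by rfl
  have c17_10 : Nat.choose 17 10 = 19448 := by rfl
  have c17_11 : Nat.choose 17 11 = 12376 := by rfl
  have c17_12 : Nat.choose 17 12 = 6188 := by rfl
  have c17_13 : Nat.choose 17 13 = 2380 := by rfl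
  have c17_14 : Nat.choose 17 14 = 680 := by rfl
  have c17_15 : Nat.choose 17 15 = 136 := by rfl
  have c17_16 : Nat.choose 17 16 = 17 := by rfl
  have c17_17 : Nat.choose 17 17 = 1 := by rfl
  have c20_2 : Nat.choose 20 2 = 190 := by rfl
  have c20_3 : Nat.choose 20 3 = 1140 := by rfl
  have c20_5 : Nat.choose 20 5 = 15504 := by rfl
  have c20_6 : Nat.choose 20 6 = 38760 := by rfl
  have c20_8 : Nat.choose 20 8 = 125970 := by rfl
  have c20_9 : Nat.choose 20 9 = 167960 := by rfl
  have c20_11 : Nat.choose 20 11 = 167960 := by rfl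
  have c20_12 : Nat.choose 20 12 = 125970 := by rfl
  have c20_14 : Nat.choose 20 14 = 38760 := by rfl
  have c20_15 : Nat.choose 20 15 = 15504 := by rfl
  have c20_17 : Nat.choose 20 17 = 1140 := by rfl
  have c20_18 : Nat.choose 20 18 = 190 := by rfl
  have hR2 : R 2 = (1 : ℚ) := by
    have h := hR 2 (by norm_num)
    rw [Finset.sum_Ico_eq_sum_range] at h
    first
    | simp only [Finset.sum_range_succ, Finset.sum_range_zero] at h
    | skip
    norm_num [c2_1, c2_2, hR1] at h
    linarith
  have hR3 : R 3 = (12 : ℚ) := by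
    have h := hR 3 (by norm_num)
    rw [Finset.sum_Ico_eq_sum_range] at h
    first
    | simp only [Finset.sum_range_succ, Finset.sum_range_zero] at h
    | skip
    norm_num [c5_1, c5_2, c5_4, c5_5, hR1, hR2] at h
    linarith
  have hR4 : R 4 = (620 : ℚ) := by
    have h := hR 4 (by norm_num)
    rw [Finset.sum_Ico_eq_sum_range] at h
    first
    | simp only [Finset.sum_range_succ, Finset.sum_range_zero] at h
    | skip
    norm_num [c8_1, c8_2, c8_4, c8_5, c8_7, c8_8, hR1, hR2, hR3] at h
    linarith
  have hR5 : R 5 = (87304 : ℚ) := by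
    have h := hR 5 (by norm_num)
    rw [Finset.sum_Ico_eq_sum_range] at h
    first
    | simp only [Finset.sum_range_succ, Finset.sum_range_zero] at h
    | skip
    norm_num [c11_1, c11_10, c11_11, c11_2, c11_4, c11_5, c11_7, c11_8, hR1, hR2, hR3, hR4] at h
    linarith
  have hR6 : R 6 = (26312976 : ℚ) := by
    have h := hR 6 (by norm_num)
    rw [Finset.sum_Ico_eq_sum_range] at h
    first
    | simp only [Finset.sum_range_succ, Finset.sum_range_zero] at h
    | skip
    norm_num [c14_1, c14_10, c14_11, c14_13, c14_14, c14_2, c14_4, c14_5, c14_7, c14_8, hR1, hR2, hR3, hR4, hR5] at h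
    linarith
  have hR7 : R 7 = (14616808192 : ℚ) := by
    have h := hR 7 (by norm_num)
    rw [Finset.sum_Ico_eq_sum_range] at h
    first
    | simp only [Finset.sum_range_succ, Finset.sum_range_zero] at h
    | skip
    norm_num [c17_1, c17_10, c17_11, c17_13, c17_14, c17_16, c17_17, c17_2, c17_4, c17_5, c17_7, c17_8, hR1, hR2, hR3, hR4, hR5, hR6] at h
    linarith
  have hE1 : E 1 = (0 : ℚ) := by
    have h := hE 1 (by norm_num)
    rw [Finset.sum_Ico_eq_sum_range] at h
    first
    | simp only [Finset.sum_range_succ, Finset.sum_range_zero] at h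
    | skip
    norm_num [c1_3, hR1] at h
    linarith
  have hE2 : E 2 = (0 : ℚ) := by
    have h := hE 2 (by norm_num)
    rw [Finset.sum_Ico_eq_sum_range] at h
    first
    | simp only [Finset.sum_range_succ, Finset.sum_range_zero] at h
    | skip
    norm_num [c2_3, c5_3, hE1, hR1, hR2] at h
    linarith
  have hE3 : E 3 = (1 : ℚ) := by
    have h := hE 3 (by norm_num)
    rw [Finset.sum_Ico_eq_sum_range] at h
    first
    | simp only [Finset.sum_range_succ, Finset.sum_range_zero] at h
    | skip
    norm_num [c3_3, c8_3, c8_6, hE1, hE2, hR1, hR2, hR3] at h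
    linarith
  have hE4 : E 4 = (225 : ℚ) := by
    have h := hE 4 (by norm_num)
    rw [Finset.sum_Ico_eq_sum_range] at h
    first
    | simp only [Finset.sum_range_succ, Finset.sum_range_zero] at h
    | skip
    norm_num [c11_3, c11_6, c11_9, c4_3, hE1, hE2, hE3, hR1, hR2, hR3, hR4] at h
    linarith
  have hE5 : E 5 = (87192 : ℚ) := by
    have h := hE 5 (by norm_num)
    rw [Finset.sum_Ico_eq_sum_range] at h
    first
    | simp only [Finset.sum_range_succ, Finset.sum_range_zero] at h
    | skip
    norm_num [c14_12, c14_3, c14_6, c14_9, c5_3, hE1, hE2, hE3, hE4, hR1, hR2, hR3, hR4, hR5] at h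
    linarith
  have hE6 : E 6 = (57435240 : ℚ) := by
    have h := hE 6 (by norm_num)
    rw [Finset.sum_Ico_eq_sum_range] at h
    first
    | simp only [Finset.sum_range_succ, Finset.sum_range_zero] at h
    | skip
    norm_num [c17_12, c17_15, c17_3, c17_6, c17_9, c6_3, hE1, hE2, hE3, hE4, hE5, hR1, hR2, hR3, hR4, hR5, hR6] at h
    linarith
  have hE7 : E 7 = (60478511040 : ℚ) := by
    have h := hE 7 (by norm_num)
    rw [Finset.sum_Ico_eq_sum_range] at h
    first
    | simp only [Finset.sum_range_succ, Finset.sum_range_zero] at h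
    | skip
    norm_num [c20_12, c20_15, c20_18, c20_3, c20_6, c20_9, c7_3, hE1, hE2, hE3, hE4, hE5, hE6, hR1, hR2, hR3, hR4, hR5, hR6, hR7] at h
    linarith
  have hB3 : B 3 = (3 : ℚ) := by
    have h := hB 3 (by norm_num)
    rw [Finset.sum_Ico_eq_sum_range] at h
    first
    | simp only [Finset.sum_range_succ, Finset.sum_range_zero] at h
    | skip
    norm_num [c2_2, c8_2, c8_5, hE1, hE2, hR1, hR2, hR3] at h
    linarith
  have hCc3 : Cc 3 = (0 : ℚ) := by
    have h := hCc 3 (by norm_num)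
    rw [Finset.sum_Ico_eq_sum_range] at h
    first
    | simp only [Finset.sum_range_succ, Finset.sum_range_zero] at h
    | skip
    norm_num [c2_2, c8_2, c8_5, hE1, hE2, hR1, hR2, hR3] at h
    linarith
  have hD3 : Δ 3 = (12 : ℚ) := by
    have h := hΔ 3 (by norm_num)
    rw [Finset.sum_Ico_eq_sum_range] at h
    first
    | simp only [Finset.sum_range_succ, Finset.sum_range_zero] at h
    | skip
    norm_num [c2_2, c8_2, c8_5, hE1, hE2, hR1, hR2, hR3] at h
    linarith
  have hCU3 : CU 3 = (0 : ℚ) := by rw [hCU 3 (by norm_num), hB3, hCc3, hD3, hE3]; norm_num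
  have hgH3 : gHat 3 = (0 : ℚ) := by
    have h := hgHat 3 (by norm_num)
    rw [Finset.sum_Ico_eq_sum_range] at h
    first
    | simp only [Finset.sum_range_succ, Finset.sum_range_zero] at h
    | skip
    norm_num [c2_2, c8_2, c8_5, hE1, hE2, hE3, hR1, hR2, hR3] at h
    linarith
  have hg3 : g 3 = (0 : ℚ) := by
    have h := hg 3 (by norm_num)
    rw [Finset.sum_Ico_eq_sum_range] at h
    first
    | simp only [Finset.sum_range_succ, Finset.sum_range_zero] at h
    | skip
    norm_num [c2_2, c8_2, c8_5, hCU3, hE1, hE2, hR1, hR2, hR3, hgH3] at h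
    linarith
  have hB4 : B 4 = (785 : ℚ) := by
    have h := hB 4 (by norm_num)
    rw [Finset.sum_Ico_eq_sum_range] at h
    first
    | simp only [Finset.sum_range_succ, Finset.sum_range_zero] at h
    | skip
    norm_num [c11_2, c11_5, c11_8, c3_2, hE1, hE2, hE3, hR1, hR2, hR3, hR4] at h
    linarith
  have hCc4 : Cc 4 = (-165 : ℚ) := by
    have h := hCc 4 (by norm_num)
    rw [Finset.sum_Ico_eq_sum_range] at h
    first
    | simp only [Finset.sum_range_succ, Finset.sum_range_zero] at h
    | skip
    norm_num [c11_2, c11_5, c11_8, c3_2, hE1, hE2, hE3, hR1, hR2, hR3, hR4] at h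
    linarith
  have hD4 : Δ 4 = (2025 : ℚ) := by
    have h := hΔ 4 (by norm_num)
    rw [Finset.sum_Ico_eq_sum_range] at h
    first
    | simp only [Finset.sum_range_succ, Finset.sum_range_zero] at h
    | skip
    norm_num [c11_2, c11_5, c11_8, c3_2, hE1, hE2, hE3, hR1, hR2, hR3, hR4] at h
    linarith
  have hCU4 : CU 4 = (840 : ℚ) := by rw [hCU 4 (by norm_num), hB4, hCc4, hD4, hE4]; norm_num
  have hgH4 : gHat 4 = (486 : ℚ) := by
    have h := hgHat 4 (by norm_num)
    rw [Finset.sum_Ico_eq_sum_range] at h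
    first
    | simp only [Finset.sum_range_succ, Finset.sum_range_zero] at h
    | skip
    norm_num [c11_2, c11_5, c11_8, c3_2, hE1, hE2, hE3, hE4, hR1, hR2, hR3, hR4] at h
    linarith
  have hg4 : g 4 = (2676 : ℚ) := by
    have h := hg 4 (by norm_num)
    rw [Finset.sum_Ico_eq_sum_range] at h
    first
    | simp only [Finset.sum_range_succ, Finset.sum_range_zero] at h
    | skip
    norm_num [c11_2, c11_5, c11_8, c3_2, hCU4, hE1, hE2, hE3, hR1, hR2, hR3, hR4, hgH4] at h
    linarith
  have hB5 : B 5 = (324184 : ℚ) := by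
    have h := hB 5 (by norm_num)
    rw [Finset.sum_Ico_eq_sum_range] at h
    first
    | simp only [Finset.sum_range_succ, Finset.sum_range_zero] at h
    | skip
    norm_num [c14_11, c14_2, c14_5, c14_8, c4_2, hE1, hE2, hE3, hE4, hR1, hR2, hR3, hR4, hR5] at h
    linarith
  have hCc5 : Cc 5 = (-93912 : ℚ) := by
    have h := hCc 5 (by norm_num)
    rw [Finset.sum_Ico_eq_sum_range] at h
    first
    | simp only [Finset.sum_range_succ, Finset.sum_range_zero] at h
    | skip
    norm_num [c14_11, c14_2, c14_5, c14_8, c4_2, hE1, hE2, hE3, hE4, hR1, hR2, hR3, hR4, hR5] at h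
    linarith
  have hD5 : Δ 5 = (617736 : ℚ) := by
    have h := hΔ 5 (by norm_num)
    rw [Finset.sum_Ico_eq_sum_range] at h
    first
    | simp only [Finset.sum_range_succ, Finset.sum_range_zero] at h
    | skip
    norm_num [c14_11, c14_2, c14_5, c14_8, c4_2, hE1, hE2, hE3, hE4, hR1, hR2, hR3, hR4, hR5] at h
    linarith
  have hCU5 : CU 5 = (522480 : ℚ) := by rw [hCU 5 (by norm_num), hB5, hCc5, hD5, hE5]; norm_num
  have hgH5 : gHat 5 = (410439 : ℚ) := by
    have h := hgHat 5 (by norm_num)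
    rw [Finset.sum_Ico_eq_sum_range] at h
    first
    | simp only [Finset.sum_range_succ, Finset.sum_range_zero] at h
    | skip
    norm_num [c14_11, c14_2, c14_5, c14_8, c4_2, hE1, hE2, hE3, hE4, hE5, hR1, hR2, hR3, hR4, hR5] at h
    linarith
  have hg5 : g 5 = (1440874 : ℚ) := by
    have h := hg 5 (by norm_num)
    rw [Finset.sum_Ico_eq_sum_range] at h
    first
    | simp only [Finset.sum_range_succ, Finset.sum_range_zero] at h
    | skip
    norm_num [c14_11, c14_2, c14_5, c14_8, c4_2, hCU5, hE1, hE2, hE3, hE4, hR1, hR2, hR3, hR4, hR5, hgH5] at h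
    linarith
  have hB6 : B 6 = (221008680 : ℚ) := by
    have h := hB 6 (by norm_num)
    rw [Finset.sum_Ico_eq_sum_range] at h
    first
    | simp only [Finset.sum_range_succ, Finset.sum_range_zero] at h
    | skip
    norm_num [c17_11, c17_14, c17_2, c17_5, c17_8, c5_2, hE1, hE2, hE3, hE4, hE5, hR1, hR2, hR3, hR4, hR5, hR6] at h
    linarith
  have hCc6 : Cc 6 = (-73054440 : ℚ) := by
    have h := hCc 6 (by norm_num)
    rw [Finset.sum_Ico_eq_sum_range] at h
    first
    | simp only [Finset.sum_range_succ, Finset.sum_range_zero] at h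
    | skip
    norm_num [c17_11, c17_14, c17_2, c17_5, c17_8, c5_2, hE1, hE2, hE3, hE4, hE5, hR1, hR2, hR3, hR4, hR5, hR6] at h
    linarith
  have hD6 : Δ 6 = (336184200 : ℚ) := by
    have h := hΔ 6 (by norm_num)
    rw [Finset.sum_Ico_eq_sum_range] at h
    first
    | simp only [Finset.sum_range_succ, Finset.sum_range_zero] at h
    | skip
    norm_num [c17_11, c17_14, c17_2, c17_5, c17_8, c5_2, hE1, hE2, hE3, hE4, hE5, hR1, hR2, hR3, hR4, hR5, hR6] at h
    linarith
  have hCU6 : CU 6 = (426093120 : ℚ) := by rw [hCU 6 (by norm_num), hB6, hCc6, hD6, hE6]; norm_num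
  have hgH6 : gHat 6 = (395296561 : ℚ) := by
    have h := hgHat 6 (by norm_num)
    rw [Finset.sum_Ico_eq_sum_range] at h
    first
    | simp only [Finset.sum_range_succ, Finset.sum_range_zero] at h
    | skip
    norm_num [c17_11, c17_14, c17_2, c17_5, c17_8, c5_2, hE1, hE2, hE3, hE4, hE5, hE6, hR1, hR2, hR3, hR4, hR5, hR6] at h
    linarith
  have hg6 : g 6 = (1117718773 : ℚ) := by
    have h := hg 6 (by norm_num)
    rw [Finset.sum_Ico_eq_sum_range] at h
    first
    | simp only [Finset.sum_range_succ, Finset.sum_range_zero] at h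
    | skip
    norm_num [c17_11, c17_14, c17_2, c17_5, c17_8, c5_2, hCU6, hE1, hE2, hE3, hE4, hE5, hR1, hR2, hR3, hR4, hR5, hR6, hgH6] at h
    linarith
  have hB7 : B 7 = (237652514240 : ℚ) := by
    have h := hB 7 (by norm_num)
    rw [Finset.sum_Ico_eq_sum_range] at h
    first
    | simp only [Finset.sum_range_succ, Finset.sum_range_zero] at h
    | skip
    norm_num [c20_11, c20_14, c20_17, c20_2, c20_5, c20_8, c6_2, hE1, hE2, hE3, hE4, hE5, hE6, hR1, hR2, hR3, hR4, hR5, hR6, hR7] at h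
    linarith
  have hCc7 : Cc 7 = (-84325471680 : ℚ) := by
    have h := hCc 7 (by norm_num)
    rw [Finset.sum_Ico_eq_sum_range] at h
    first
    | simp only [Finset.sum_range_succ, Finset.sum_range_zero] at h
    | skip
    norm_num [c20_11, c20_14, c20_17, c20_2, c20_5, c20_8, c6_2, hE1, hE2, hE3, hE4, hE5, hE6, hR1, hR2, hR3, hR4, hR5, hR6, hR7] at h
    linarith
  have hD7 : Δ 7 = (303577594560 : ℚ) := by
    have h := hΔ 7 (by norm_num)
    rw [Finset.sum_Ico_eq_sum_range] at h
    first
    | simp only [Finset.sum_range_succ, Finset.sum_range_zero] at h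
    | skip
    norm_num [c20_11, c20_14, c20_17, c20_2, c20_5, c20_8, c6_2, hE1, hE2, hE3, hE4, hE5, hE6, hR1, hR2, hR3, hR4, hR5, hR6, hR7] at h
    linarith
  have hCU7 : CU 7 = (506490009600 : ℚ) := by rw [hCU 7 (by norm_num), hB7, hCc7, hD7, hE7]; norm_num
  have hgH7 : gHat 7 = (534578574561 : ℚ) := by
    have h := hgHat 7 (by norm_num)
    rw [Finset.sum_Ico_eq_sum_range] at h
    first
    | simp only [Finset.sum_range_succ, Finset.sum_range_zero] at h
    | skip
    norm_num [c20_11, c20_14, c20_17, c20_2, c20_5, c20_8, c6_2, hE1, hE2, hE3, hE4, hE5, hE6, hE7, hR1, hR2, hR3, hR4, hR5, hR6, hR7] at h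
    linarith
  have hg7 : g 7 = (1317320595961 : ℚ) := by
    have h := hg 7 (by norm_num)
    rw [Finset.sum_Ico_eq_sum_range] at h
    first
    | simp only [Finset.sum_range_succ, Finset.sum_range_zero] at h
    | skip
    norm_num [c20_11, c20_14, c20_17, c20_2, c20_5, c20_8, c6_2, hCU7, hE1, hE2, hE3, hE4, hE5, hE6, hR1, hR2, hR3, hR4, hR5, hR6, hR7, hgH7] at h
    linarith
  exact ⟨hg3, hg4, hg5, hg6, hg7⟩
end
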